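/- Let X be a pre-Riesz space and let P and Q be band projections on X. Then the following assertions are equivalent: (i) PX ⊆ QX; (ii) QP = P; (iii) P ≤ Q (i.e. Q − P is a positive operator). -/

import Mathlib

open Pointwise

variable {X : Type*} [AddCommGroup X] [PartialOrder X] [IsOrderedAddMonoid X] [Module ℝ X]
    [PosSMulStrictMono ℝ X]

/-- Two elements of an ordered vector space are disjoint if the sets `{x+y, -x-y}` and
`{x-y, y-x}` have the same set of upper bounds. -/
def UDisjoint (x y : X) : Prop :=
  upperBounds ({x + y, -x - y} : Set X) = upperBounds ({x - y, y - x} : Set X)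

/-- The disjoint complement `S^⊥` of a set `S`. -/
def dComp (S : Set X) : Set X := {x : X | ∀ s ∈ S, UDisjoint x s}

/-- A band: a set equal to its double disjoint complement. -/
def IsBand (B : Set X) : Prop := B = dComp (dComp B)

/-- A projection band: a band `B` with `B ∩ B^⊥ = {0}` and `B + B^⊥ = X`. -/
def IsProjBand (B : Set X) : Prop :=
  IsBand B ∧ B ∩ dComp B = {0} ∧ ∀ x : X, ∃ b ∈ B, ∃ c ∈ dComp B, x = b + c

/-- A positive linear operator. -/
def IsPosMap (T : X →ₗ[ℝ] X) : Prop := ∀ x : X, 0 ≤ x → 0 ≤ T x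

/-- A band projection: a linear projection whose range is a projection band and whose
kernel is the disjoint complement of the range. -/
def IsBandProj (P : X →ₗ[ℝ] X) : Prop :=
  P ∘ₗ P = P ∧ IsProjBand (Set.range ⇑P) ∧ (LinearMap.ker P : Set X) = dComp (Set.range ⇑P)

/-- A pre-Riesz space: for every nonempty finite `A ⊆ X` and every `x`, if the upper bounds
of `x + A` are contained in the upper bounds of `A`, then `x ≥ 0`. -/
def IsPreRiesz (X : Type*) [AddCommGroup X] [PartialOrder X] [IsOrderedAddMonoid X] [Module ℝ X]
    [PosSMulStrictMono ℝ X] : Prop :=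
  ∀ (A : Set X) (x : X), A.Finite → A.Nonempty →
    upperBounds ((x + ·) '' A) ⊆ upperBounds A → 0 ≤ x


set_option linter.unusedSectionVars false in
lemma mem_ub_pair {a b u : X} : u ∈ upperBounds ({a, b} : Set X) ↔ a ≤ u ∧ b ≤ u := by
  simp [upperBounds]

set_option linter.unusedSectionVars false in
lemma uDisjoint_symm {x y : X} (h : UDisjoint x y) : UDisjoint y x := by
  unfold UDisjoint at *
  rw [show y + x = x + y from add_comm y x, show -y - x = -x - y from by abel,
    Set.pair_comm (y - x) (x - y)]
  exact h

lemma pos_of_disjoint (hX : IsPreRiesz X) {b c : X} (h : UDisjoint b c) (hbc : 0 ≤ b + c) :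
    0 ≤ c := by
  have h2 : 0 ≤ c + c := by
    apply hX {b - c, -b - c} (c + c) (Set.toFinite _) ⟨b - c, by simp⟩
    intro u hu
    rw [Set.image_pair, show c + c + (b - c) = b + c from by abel,
      show c + c + (-b - c) = c - b from by abel, mem_ub_pair] at hu
    have hneg : -b - c ≤ u := by
      calc -b - c = -(b + c) := by abel
        _ ≤ 0 := neg_nonpos.mpr hbc
        _ ≤ b + c := hbc
        _ ≤ u := hu.1
    have hu1 : u ∈ upperBounds ({b + c, -b - c} : Set X) := mem_ub_pair.mpr ⟨hu.1, hneg⟩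
    rw [h, mem_ub_pair] at hu1
    exact mem_ub_pair.mpr ⟨hu1.1, hneg⟩
  have h3 : 0 ≤ ((2:ℝ)⁻¹) • ((2:ℝ) • c) := smul_nonneg (by norm_num) (by rwa [two_smul])
  rwa [smul_smul, inv_mul_cancel₀ (by norm_num : (2:ℝ) ≠ 0), one_smul] at h3

lemma exists_ub (hX : IsPreRiesz X) (x : X) : ∃ u : X, 0 ≤ u ∧ x ≤ u := by
  by_cases hne : (upperBounds ({0, x} : Set X)).Nonempty
  · obtain ⟨u, hu⟩ := hne
    rw [mem_ub_pair] at hu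
    exact ⟨u, hu.1, hu.2⟩
  · refine ⟨x, ?_, le_refl x⟩
    apply hX {0, x} x (Set.toFinite _) ⟨0, by simp⟩
    intro u hu
    exfalso
    apply hne
    rw [Set.image_pair, mem_ub_pair] at hu
    refine ⟨u - x, mem_ub_pair.mpr ⟨?_, ?_⟩⟩
    · have : x ≤ u := by simpa using hu.1
      exact sub_nonneg.mpr this
    · exact le_sub_iff_add_le.mpr (by rw [add_comm]; exact hu.2)

lemma bandProj_nonneg (hX : IsPreRiesz X) {P : X →ₗ[ℝ] X} (hP : IsBandProj P) {x : X}
    (hx : 0 ≤ x) : 0 ≤ P x ∧ 0 ≤ x - P x := by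
  have hPP : P (P x) = P x := by
    have := LinearMap.congr_fun hP.1 x
    simpa using this
  have hker : x - P x ∈ (LinearMap.ker P : Set X) := by
    simp [LinearMap.mem_ker, map_sub, hPP]
  rw [hP.2.2] at hker
  have hd : UDisjoint (x - P x) (P x) := hker (P x) ⟨x, rfl⟩
  have hd' : UDisjoint (P x) (x - P x) := uDisjoint_symm hd
  constructor
  · exact pos_of_disjoint hX hd (by rwa [sub_add_cancel])
  · exact pos_of_disjoint hX hd' (by rwa [add_sub_cancel])

/-- Domination of band projections: `PX ⊆ QX` iff `QP = P` iff `P ≤ Q`. -/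
theorem stmt_4 (hX : IsPreRiesz X) (P Q : X →ₗ[ℝ] X)
    (hP : IsBandProj P) (hQ : IsBandProj Q) :
    [Set.range ⇑P ⊆ Set.range ⇑Q,
     Q ∘ₗ P = P,
     IsPosMap (Q - P)].TFAE := by
  have hQQ : ∀ y : X, Q (Q y) = Q y := fun y => by
    have := LinearMap.congr_fun hQ.1 y
    simpa using this
  tfae_have 1 → 2 := by
    intro h
    ext x
    obtain ⟨w, hw⟩ := h ⟨x, rfl⟩
    calc (Q ∘ₗ P) x = Q (P x) := rfl
      _ = Q (Q w) := by rw [hw]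
      _ = Q w := hQQ w
      _ = P x := hw
  tfae_have 2 → 3 := by
    intro h x hx
    have hQP : Q (P x) = P x := by
      have := LinearMap.congr_fun h x
      simpa using this
    have : (Q - P) x = Q (x - P x) := by
      rw [map_sub, hQP]
      simp [LinearMap.sub_apply]
    rw [this]
    exact (bandProj_nonneg hX hQ (bandProj_nonneg hX hP hx).2).1
  tfae_have 3 → 2 := by
    intro h
    have key : ∀ x : X, 0 ≤ x → Q (P x) = P x := by
      intro x hx
      have h1 : 0 ≤ P x := (bandProj_nonneg hX hP hx).1
      have h2 : Q (P x) ≤ P x := sub_nonneg.mp (bandProj_nonneg hX hQ h1).2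
      have h3 : 0 ≤ (Q - P) x := h x hx
      have h4 := (bandProj_nonneg hX hQ h3).2
      have he : (Q - P) x - Q ((Q - P) x) = Q (P x) - P x := by
        simp only [LinearMap.sub_apply, map_sub, hQQ]
        abel
      rw [he] at h4
      exact le_antisymm h2 (sub_nonneg.mp h4)
    ext x
    obtain ⟨u, hu0, hux⟩ := exists_ub hX x
    have hv : 0 ≤ u - x := sub_nonneg.mpr hux
    have e : x = u - (u - x) := by abel
    calc (Q ∘ₗ P) x = Q (P x) := rfl
      _ = Q (P u) - Q (P (u - x)) := by rw [e]; simp [map_sub]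
      _ = P u - P (u - x) := by rw [key u hu0, key (u - x) hv]
      _ = P x := by rw [e]; simp [map_sub]
  tfae_have 2 → 1 := by
    intro h y hy
    obtain ⟨x, rfl⟩ := hy
    exact ⟨P x, by rw [← LinearMap.comp_apply, h]⟩
  tfae_finish
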